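/- Let G be a finite simple graph that is C_3-free, C_5-free and C_6-free, let x be a vertex and Y ⊆ N(x) with |Y| ≥ 2. Then for a set R of vertices, the following are equivalent: (a) R is a minimal redundant set of G with red(R) = {x} and N(x) ∩ R = Y; (b) R = S ∪ Y ∪ {x} where (i) S ⊆ N²(x), (ii) S ∩ N(Y) = ∅, (iii) each y ∈ Y has a private neighbor with respect to Y ∪ {x}, and (iv) S minimally dominates N(x) \ Y. -/

import Mathlib

open Set SimpleGraph

variable {V : Type*}

/-- The closed neighborhood `N[v]` of a vertex. -/
def closedNbr (G : SimpleGraph V) (v : V) : Set V := insert v (G.neighborSet v)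

/-- Private neighbors of `x` with respect to `I`. -/
def privSet (G : SimpleGraph V) (x : V) (I : Set V) : Set V :=
  {y ∈ closedNbr G x | closedNbr G y ∩ I = {x}}

/-- A set is irredundant if every element has a private neighbor. -/
def Irred (G : SimpleGraph V) (I : Set V) : Prop := ∀ x ∈ I, (privSet G x I).Nonempty

/-- A maximal irredundant set. -/
def MaxIrred (G : SimpleGraph V) (I : Set V) : Prop :=
  Irred G I ∧ ∀ J : Set V, Irred G J → I ⊆ J → J = I

def Redundant (G : SimpleGraph V) (R : Set V) : Prop := ¬ Irred G R

def MinRedundant (G : SimpleGraph V) (R : Set V) : Prop :=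
  Redundant G R ∧ ∀ S : Set V, S ⊂ R → ¬ Redundant G S

/-- The set of redundant vertices of a set. -/
def redVerts (G : SimpleGraph V) (R : Set V) : Set V := {x ∈ R | privSet G x R = ∅}

def Dominating (G : SimpleGraph V) (D : Set V) : Prop := ∀ v : V, ∃ d ∈ D, v ∈ closedNbr G d

def MinDominating (G : SimpleGraph V) (D : Set V) : Prop :=
  Dominating G D ∧ ∀ S : Set V, S ⊂ D → ¬ Dominating G S

/-- Vertices at distance at most 2 from `x`. -/
def ball2 (G : SimpleGraph V) (x : V) : Set V :=
  {y | y = x ∨ G.Adj x y ∨ ∃ w, G.Adj x w ∧ G.Adj w y}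

/-- Vertices at distance exactly 2 from `x`. -/
def sphere2 (G : SimpleGraph V) (x : V) : Set V :=
  {y | y ≠ x ∧ ¬ G.Adj x y ∧ ∃ w, G.Adj x w ∧ G.Adj w y}

/-- `G` contains no induced cycle of length `k`. -/
def CFree (G : SimpleGraph V) (k : ℕ) : Prop :=
  IsEmpty (SimpleGraph.cycleGraph k ↪g G)

/-- `S` dominates `B` through open neighborhoods. -/
def DomOver (G : SimpleGraph V) (S B : Set V) : Prop := ∀ b ∈ B, ∃ s ∈ S, G.Adj s b

def MinDomOver (G : SimpleGraph V) (S B : Set V) : Prop :=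
  DomOver G S B ∧ ∀ S' : Set V, S' ⊂ S → ¬ DomOver G S' B

/-- `N(Y)`, the union of open neighborhoods of elements of `Y`. -/
def nbrUnion (G : SimpleGraph V) (Y : Set V) : Set V := ⋃ y ∈ Y, G.neighborSet y

/-- Private edges of `x` with respect to `I` in a hypergraph. -/
def hypPriv (H : Set (Set V)) (x : V) (I : Set V) : Set (Set V) := {E ∈ H | E ∩ I = {x}}

def HypIrred (H : Set (Set V)) (I : Set V) : Prop := ∀ x ∈ I, (hypPriv H x I).Nonempty

def HypMaxIrred (H : Set (Set V)) (I : Set V) : Prop :=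
  HypIrred H I ∧ ∀ J : Set V, HypIrred H J → I ⊆ J → J = I

/-- The trace of a hypergraph on a set `S`. -/
def htrace (H : Set (Set V)) (S : Set V) : Set (Set V) :=
  {F | ∃ E ∈ H, F = E ∩ S ∧ (E ∩ S).Nonempty}

/-- The closed-neighborhood hypergraph of a graph. -/
def nbrHyp (G : SimpleGraph V) : Set (Set V) := Set.range (closedNbr G)

/-- The first `i` vertices in the ordering `v` (zero-based: `v 0, …, v (i-1)`). -/
def firstVerts (v : ℕ → V) (i : ℕ) : Set V := {x | ∃ j < i, v j = x}

/-- The incidence co-bipartite graph of the closed-neighborhood hypergraph of `G`: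
`Sum.inl` is the vertex side `V`, `Sum.inr` is the copy `U`. -/
def cobip (G : SimpleGraph V) : SimpleGraph (V ⊕ V) :=
  SimpleGraph.fromRel (fun a b => match a, b with
    | Sum.inl _, Sum.inl _ => True
    | Sum.inr _, Sum.inr _ => True
    | Sum.inl a, Sum.inr b => a = b ∨ G.Adj a b
    | Sum.inr _, Sum.inl _ => False)

section Aux

set_option linter.unreachableTactic false
set_option linter.unusedTactic false

lemma triangle_free' {G : SimpleGraph V} (h3 : IsEmpty (SimpleGraph.cycleGraph 3 ↪g G))
    {a b c : V} (hab : G.Adj a b) (hbc : G.Adj b c) (hca : G.Adj c a) : False := by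
  have s1 : G.Adj b a := hab.symm
  have s2 : G.Adj c b := hbc.symm
  have s3 : G.Adj a c := hca.symm
  have n1 : ¬ G.Adj a a := G.irrefl
  have n2 : ¬ G.Adj b b := G.irrefl
  have n3 : ¬ G.Adj c c := G.irrefl
  refine h3.elim ⟨⟨![a,b,c], ?_⟩, ?_⟩
  · intro i j h
    fin_cases i <;> fin_cases j <;> simp_all <;>
      first | rfl | exact absurd h (G.ne_of_adj ‹_›) | exact absurd h.symm (G.ne_of_adj ‹_›)
  · intro i j
    fin_cases i <;> fin_cases j <;>
      simp only [Matrix.cons_val', Matrix.cons_val_zero, Matrix.cons_val_one,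
        Matrix.head_cons, Matrix.cons_val_fin_one, Matrix.head_fin_const, Matrix.cons_val_succ,
        Function.Embedding.coeFn_mk] <;>
      first
      | exact iff_of_true ‹_› (by decide)
      | exact iff_of_false ‹_› (by decide)

lemma c5_free' {G : SimpleGraph V} (h5 : IsEmpty (SimpleGraph.cycleGraph 5 ↪g G))
    {a b c d e : V}
    (hab : G.Adj a b) (hbc : G.Adj b c) (hcd : G.Adj c d) (hde : G.Adj d e) (hea : G.Adj e a)
    (hac : ¬G.Adj a c) (hbd : ¬G.Adj b d) (hce : ¬G.Adj c e) (had : ¬G.Adj a d)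
    (hbe : ¬G.Adj b e)
    (nac : a ≠ c) (nad : a ≠ d) (nbd : b ≠ d) (nbe : b ≠ e) (nce : c ≠ e) : False := by
  have s1 : G.Adj b a := hab.symm
  have s2 : G.Adj c b := hbc.symm
  have s3 : G.Adj d c := hcd.symm
  have s4 : G.Adj e d := hde.symm
  have s5 : G.Adj a e := hea.symm
  have m1 : ¬ G.Adj c a := fun h => hac h.symm
  have m2 : ¬ G.Adj d b := fun h => hbd h.symm
  have m3 : ¬ G.Adj e c := fun h => hce h.symm
  have m4 : ¬ G.Adj d a := fun h => had h.symm
  have m5 : ¬ G.Adj e b := fun h => hbe h.symm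
  have n1 : ¬ G.Adj a a := G.irrefl
  have n2 : ¬ G.Adj b b := G.irrefl
  have n3 : ¬ G.Adj c c := G.irrefl
  have n4 : ¬ G.Adj d d := G.irrefl
  have n5 : ¬ G.Adj e e := G.irrefl
  have nca : c ≠ a := nac.symm
  have nda : d ≠ a := nad.symm
  have ndb : d ≠ b := nbd.symm
  have neb : e ≠ b := nbe.symm
  have nec : e ≠ c := nce.symm
  refine h5.elim ⟨⟨![a,b,c,d,e], ?_⟩, ?_⟩
  · intro i j h
    fin_cases i <;> fin_cases j <;> simp_all
  · intro i j
    fin_cases i <;> fin_cases j <;>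
      simp only [Matrix.cons_val', Matrix.cons_val_zero, Matrix.cons_val_one,
        Matrix.head_cons, Matrix.cons_val_fin_one, Matrix.head_fin_const, Matrix.cons_val_succ,
        Function.Embedding.coeFn_mk] <;>
      first
      | exact iff_of_true ‹_› (by decide)
      | exact iff_of_false ‹_› (by decide)

lemma mem_cn {G : SimpleGraph V} {v z : V} : z ∈ closedNbr G v ↔ z = v ∨ G.Adj v z := by
  simp [closedNbr]

lemma cn_symm {G : SimpleGraph V} {v z : V} (h : z ∈ closedNbr G v) : v ∈ closedNbr G z := by
  rcases mem_cn.1 h with h | h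
  · exact mem_cn.2 (Or.inl h.symm)
  · exact mem_cn.2 (Or.inr h.symm)

lemma priv_mono {G : SimpleGraph V} {z : V} {I J : Set V} (hz : z ∈ J) (hJI : J ⊆ I) :
    privSet G z I ⊆ privSet G z J := by
  rintro y ⟨hy1, hy2⟩
  have hzy : z ∈ closedNbr G y := by
    have h : z ∈ closedNbr G y ∩ I := hy2.symm ▸ rfl
    exact h.1
  refine ⟨hy1, ?_⟩
  apply Set.eq_singleton_iff_unique_mem.2
  refine ⟨⟨hzy, hz⟩, fun w hw => ?_⟩
  have h : w ∈ ({z} : Set V) := hy2 ▸ ⟨hw.1, hJI hw.2⟩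
  exact h

end Aux

theorem stmt17 [Fintype V] (G : SimpleGraph V) (h3 : CFree G 3) (h5 : CFree G 5)
    (h6 : CFree G 6) (x : V) (Y : Set V) (hY : Y ⊆ G.neighborSet x)
    (hcard : 2 ≤ Y.ncard) (R : Set V) :
    (MinRedundant G R ∧ redVerts G R = {x} ∧ G.neighborSet x ∩ R = Y) ↔
    (∃ S : Set V, R = S ∪ Y ∪ {x} ∧
      S ⊆ sphere2 G x ∧
      S ∩ nbrUnion G Y = ∅ ∧
      (∀ y ∈ Y, (privSet G y (Y ∪ {x})).Nonempty) ∧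
      MinDomOver G S (G.neighborSet x \ Y)) := by
  have tri : ∀ {a b c : V}, G.Adj a b → G.Adj b c → G.Adj c a → False :=
    fun hab hbc hca => triangle_free' h3 hab hbc hca
  have hxy : ∀ y ∈ Y, G.Adj x y := fun y hy => hY hy
  have hxnY : x ∉ Y := fun h => G.irrefl (hxy x h)
  obtain ⟨y₁, hy₁, y₂, hy₂, hy12⟩ : ∃ y₁ ∈ Y, ∃ y₂ ∈ Y, y₁ ≠ y₂ :=
    (Set.one_lt_ncard Y.toFinite).1 (by omega)
  have hYY : ∀ y ∈ Y, ∀ y' ∈ Y, ¬ G.Adj y y' := fun y hy y' hy' h =>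
    tri (hxy y hy) h (hxy y' hy').symm
  constructor
  · rintro ⟨⟨hRed, hMin⟩, hredV, hNR⟩
    have hirr : ∀ R' ⊂ R, Irred G R' := fun R' h => not_not.1 (hMin R' h)
    have hxmem : x ∈ redVerts G R := hredV ▸ rfl
    have hxR : x ∈ R := hxmem.1
    have hxpriv : privSet G x R = ∅ := hxmem.2
    have hYR : Y ⊆ R := by rw [← hNR]; exact Set.inter_subset_right
    have hprivR : ∀ z ∈ R, z ≠ x → (privSet G z R).Nonempty := by
      intro z hz hzx
      rw [Set.nonempty_iff_ne_empty]
      intro h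
      have hmem : z ∈ redVerts G R := ⟨hz, h⟩
      rw [hredV] at hmem
      exact hzx hmem
    set S : Set V := R \ (Y ∪ {x}) with hSdef
    have hSR : S ⊆ R := Set.diff_subset
    have hSx : ∀ s ∈ S, s ≠ x := fun s hs h => hs.2 (Or.inr h)
    have hSY' : ∀ s ∈ S, s ∉ Y := fun s hs h => hs.2 (Or.inl h)
    have hSnadj : ∀ s ∈ S, ¬ G.Adj x s := by
      intro s hs h
      exact hSY' s hs (by rw [← hNR]; exact ⟨h, hSR hs⟩)
    have hbig : ∀ r : V, closedNbr G x ∩ R = {x, r} → False := by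
      intro r h
      have key : ∀ y ∈ Y, y = r := by
        intro y hy
        have h1 : y ∈ closedNbr G x ∩ R := ⟨mem_cn.2 (Or.inr (hxy _ hy)), hYR hy⟩
        rw [h] at h1
        rcases h1 with h1 | h1
        · exact absurd (h1 ▸ hxy _ hy) G.irrefl
        · exact h1
      exact hy12 ((key y₁ hy₁).trans (key y₂ hy₂).symm)
    have keyA : ∀ r ∈ R, r ≠ x → ∃ v, v ∈ closedNbr G x ∧ closedNbr G v ∩ R = {x, r} := by
      intro r hr hrx
      have hsub : R \ {r} ⊂ R := Set.sdiff_singleton_ssubset.2 hr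
      obtain ⟨v, hv1, hv2⟩ := hirr _ hsub x ⟨hxR, fun h => hrx (Set.mem_singleton_iff.1 h).symm⟩
      have hxv : x ∈ closedNbr G v := by
        have h : x ∈ closedNbr G v ∩ (R \ {r}) := hv2.symm ▸ rfl
        exact h.1
      have hne : closedNbr G v ∩ R ≠ {x} := by
        intro h
        have hm : v ∈ privSet G x R := ⟨hv1, h⟩
        rw [hxpriv] at hm
        exact hm
      have hrv : r ∈ closedNbr G v := by
        by_contra hc
        apply hne
        rw [← hv2]
        ext w
        constructor
        · rintro ⟨hw1, hw2⟩
          exact ⟨hw1, hw2, fun h => hc ((Set.mem_singleton_iff.1 h) ▸ hw1)⟩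
        · rintro ⟨hw1, hw2, _⟩
          exact ⟨hw1, hw2⟩
      refine ⟨v, hv1, ?_⟩
      ext w
      constructor
      · rintro ⟨hw1, hw2⟩
        by_cases hwr : w = r
        · exact Or.inr hwr
        · have hm : w ∈ ({x} : Set V) := hv2 ▸ ⟨hw1, hw2, hwr⟩
          exact Or.inl hm
      · intro hw
        rcases hw with h | h
        · rw [h]; exact ⟨hxv, hxR⟩
        · rw [Set.mem_singleton_iff.1 h]; exact ⟨hrv, hr⟩
    have hSsph : S ⊆ sphere2 G x := by
      intro s hs
      refine ⟨hSx s hs, hSnadj s hs, ?_⟩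
      obtain ⟨v, hv1, hv2⟩ := keyA s (hSR hs) (hSx s hs)
      have hvadj : G.Adj x v := by
        rcases mem_cn.1 hv1 with h | h
        · exact (hbig s (h ▸ hv2)).elim
        · exact h
      have hsv : s ∈ closedNbr G v := by
        have hm : s ∈ ({x, s} : Set V) := Set.mem_insert_iff.2 (Or.inr rfl)
        rw [← hv2] at hm
        exact hm.1
      rcases mem_cn.1 hsv with h | h
      · exact absurd (h.symm ▸ hvadj) (hSnadj s hs)
      · exact ⟨v, hvadj, h⟩
    have hSnY : S ∩ nbrUnion G Y = ∅ := by
      rw [Set.eq_empty_iff_forall_notMem]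
      rintro s ⟨hs, hsn⟩
      obtain ⟨y, hyY, hadj⟩ : ∃ y ∈ Y, G.Adj y s := by
        simp only [nbrUnion, Set.mem_iUnion, SimpleGraph.mem_neighborSet] at hsn
        obtain ⟨y, hy, h⟩ := hsn
        exact ⟨y, hy, h⟩
      have hyx : y ≠ x := fun h => hxnY (h ▸ hyY)
      obtain ⟨v, hv1, hv2⟩ := keyA y (hYR hyY) hyx
      have hsmem : s ∈ closedNbr G y ∩ R := ⟨mem_cn.2 (Or.inr hadj), hSR hs⟩
      have hsxy : s ∉ ({x, y} : Set V) := by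
        intro hm
        rcases Set.mem_insert_iff.1 hm with h | h
        · exact hSx s hs h
        · exact hSY' s hs ((Set.mem_singleton_iff.1 h).symm ▸ hyY)
      rcases mem_cn.1 hv1 with h | h
      · exact (hbig y (h ▸ hv2)).elim
      · have hyv : y ∈ closedNbr G v := by
          have hm : y ∈ ({x, y} : Set V) := Set.mem_insert_iff.2 (Or.inr rfl)
          rw [← hv2] at hm
          exact hm.1
        rcases mem_cn.1 hyv with h2 | h2
        · have hm : s ∈ closedNbr G v ∩ R := by rw [← h2]; exact hsmem
          rw [hv2] at hm
          exact hsxy hm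
        · exact tri h h2 (hxy y hyY).symm
    have hprivY : ∀ y ∈ Y, (privSet G y (Y ∪ {x})).Nonempty := by
      intro y hy
      obtain ⟨p, hp1, hp2⟩ := hprivR y (hYR hy) (fun h => hxnY (h ▸ hy))
      refine ⟨p, hp1, ?_⟩
      apply Set.eq_singleton_iff_unique_mem.2
      refine ⟨⟨cn_symm hp1, Or.inl hy⟩, ?_⟩
      intro w hw
      have hwR : w ∈ closedNbr G p ∩ R := by
        refine ⟨hw.1, ?_⟩
        rcases hw.2 with h | h
        · exact hYR h
        · rw [Set.mem_singleton_iff.1 h]; exact hxR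
      rw [hp2] at hwR
      exact hwR
    have hdom : DomOver G S (G.neighborSet x \ Y) := by
      rintro b ⟨hb1, hb2⟩
      have hbx : G.Adj x b := hb1
      have hbR : b ∉ R := fun h => hb2 (by rw [← hNR]; exact ⟨hb1, h⟩)
      have hne : closedNbr G b ∩ R ≠ {x} := by
        intro h
        have hm : b ∈ privSet G x R := ⟨mem_cn.2 (Or.inr hbx), h⟩
        rw [hxpriv] at hm
        exact hm
      obtain ⟨r, hr, hrx⟩ : ∃ r ∈ closedNbr G b ∩ R, r ≠ x := by
        by_contra hc
        push_neg at hc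
        apply hne
        apply Set.eq_singleton_iff_unique_mem.2
        exact ⟨⟨mem_cn.2 (Or.inr hbx.symm), hxR⟩, hc⟩
      have hradj : G.Adj b r := by
        rcases mem_cn.1 hr.1 with h | h
        · exact absurd (h ▸ hr.2) hbR
        · exact h
      have hrS : r ∈ S := by
        refine ⟨hr.2, ?_⟩
        intro hm
        rcases hm with hrY | hrx'
        · exact tri (hxy r hrY) hradj.symm hbx.symm
        · exact hrx (Set.mem_singleton_iff.1 hrx')
      exact ⟨r, hrS, hradj.symm⟩
    have hmindom : MinDomOver G S (G.neighborSet x \ Y) := by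
      refine ⟨hdom, ?_⟩
      intro S' hS' hdom'
      obtain ⟨s₀, hs₀S, hs₀⟩ := Set.exists_of_ssubset hS'
      have hsub : S' ∪ Y ∪ {x} ⊂ R := by
        rw [Set.ssubset_def]
        constructor
        · rintro w ((hw | hw) | hw)
          · exact hSR (hS'.subset hw)
          · exact hYR hw
          · rw [Set.mem_singleton_iff.1 hw]; exact hxR
        · intro hc
          have hm : s₀ ∈ S' ∪ Y ∪ {x} := hc (hSR hs₀S)
          rcases hm with (h | h) | h
          · exact hs₀ h
          · exact hSY' s₀ hs₀S h
          · exact hSx s₀ hs₀S (Set.mem_singleton_iff.1 h)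
      obtain ⟨v, hv1, hv2⟩ := hirr _ hsub x (Or.inr rfl)
      rcases mem_cn.1 hv1 with h | h
      · have hm : y₁ ∈ closedNbr G v ∩ (S' ∪ Y ∪ {x}) := by
          rw [h]
          exact ⟨mem_cn.2 (Or.inr (hxy _ hy₁)), Or.inl (Or.inr hy₁)⟩
        rw [hv2] at hm
        exact G.irrefl ((Set.mem_singleton_iff.1 hm) ▸ hxy _ hy₁)
      · by_cases hvY : v ∈ Y
        · have hm : v ∈ closedNbr G v ∩ (S' ∪ Y ∪ {x}) :=
            ⟨mem_cn.2 (Or.inl rfl), Or.inl (Or.inr hvY)⟩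
          rw [hv2] at hm
          exact G.irrefl ((Set.mem_singleton_iff.1 hm) ▸ h)
        · obtain ⟨s', hs'S', hs'adj⟩ := hdom' v ⟨h, hvY⟩
          have hm : s' ∈ closedNbr G v ∩ (S' ∪ Y ∪ {x}) :=
            ⟨mem_cn.2 (Or.inr hs'adj.symm), Or.inl (Or.inl hs'S')⟩
          rw [hv2] at hm
          exact hSx s' (hS'.subset hs'S') (Set.mem_singleton_iff.1 hm)
    refine ⟨S, ?_, hSsph, hSnY, hprivY, hmindom⟩
    ext w
    constructor
    · intro hw
      by_cases h1 : w ∈ Y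
      · exact Or.inl (Or.inr h1)
      by_cases h2 : w = x
      · exact Or.inr (by rw [h2]; rfl)
      · refine Or.inl (Or.inl ⟨hw, ?_⟩)
        intro hc
        rcases hc with h | h
        · exact h1 h
        · exact h2 (Set.mem_singleton_iff.1 h)
    · intro hw
      rcases hw with (h | h) | h
      · exact hSR h
      · exact hYR h
      · rw [Set.mem_singleton_iff.1 h]; exact hxR
  · rintro ⟨S, hR, hSsph, hSnY, hprivY, hdom, hmind⟩
    have hSx : ∀ s ∈ S, s ≠ x := fun s hs => (hSsph hs).1
    have hSnadj : ∀ s ∈ S, ¬G.Adj x s := fun s hs => (hSsph hs).2.1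
    have hSw : ∀ s ∈ S, ∃ w, G.Adj x w ∧ G.Adj w s := fun s hs => (hSsph hs).2.2
    have hSYadj : ∀ s ∈ S, ∀ y ∈ Y, ¬ G.Adj y s := by
      intro s hs y hy h
      have hm : s ∈ S ∩ nbrUnion G Y := by
        refine ⟨hs, ?_⟩
        simp only [nbrUnion, Set.mem_iUnion, SimpleGraph.mem_neighborSet]
        exact ⟨y, hy, h⟩
      rw [hSnY] at hm
      exact hm
    have hSYne : ∀ s ∈ S, s ∉ Y := fun s hs h => hSnadj s hs (hxy s h)
    have hxR : x ∈ R := by rw [hR]; exact Or.inr rfl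
    have hYR : Y ⊆ R := by rw [hR]; exact fun y hy => Or.inl (Or.inr hy)
    have hSR : S ⊆ R := by rw [hR]; exact fun s hs => Or.inl (Or.inl hs)
    have hSind : ∀ s ∈ S, ∀ s' ∈ S, ¬ G.Adj s s' := by
      intro s hs s' hs' hadj
      obtain ⟨w, hw1, hw2⟩ := hSw s hs
      obtain ⟨w', hw1', hw2'⟩ := hSw s' hs'
      have c1 : ¬ G.Adj w s' := fun h => tri h hadj.symm hw2.symm
      have c2 : ¬ G.Adj s w' := fun h => tri h hw2' hadj.symm
      have c3 : ¬ G.Adj w w' := fun h => tri hw1 h hw1'.symm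
      have nww' : w ≠ w' := fun h => c1 (h.symm ▸ hw2')
      exact c5_free' h5 hw1 hw2 hadj hw2'.symm hw1'.symm
        (hSnadj s hs) c1 c2 (hSnadj s' hs') c3
        (Ne.symm (hSx s hs)) (Ne.symm (hSx s' hs'))
        (fun h => hSnadj s' hs' (h ▸ hw1)) nww'
        (fun h => hSnadj s hs (h.symm ▸ hw1'))
    have hprivS : ∀ s ∈ S, s ∈ privSet G s R := by
      intro s hs
      refine ⟨mem_cn.2 (Or.inl rfl), ?_⟩
      apply Set.eq_singleton_iff_unique_mem.2
      refine ⟨⟨mem_cn.2 (Or.inl rfl), hSR hs⟩, ?_⟩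
      rintro w ⟨hw1, hw2⟩
      rcases mem_cn.1 hw1 with h | h
      · exact h
      · rw [hR] at hw2
        rcases hw2 with (h2 | h2) | h2
        · exact absurd h (hSind s hs w h2)
        · exact absurd h.symm (hSYadj s hs w h2)
        · exact absurd ((Set.mem_singleton_iff.1 h2) ▸ h).symm (hSnadj s hs)
    have hprivYR : ∀ y ∈ Y, (privSet G y R).Nonempty := by
      intro y hy
      obtain ⟨p, hp1, hp2⟩ := hprivY y hy
      have hxp : x ∉ closedNbr G p := by
        intro h
        have hm : x ∈ ({y} : Set V) := hp2 ▸ ⟨h, Or.inr rfl⟩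
        exact hxnY ((Set.mem_singleton_iff.1 hm).symm ▸ hy)
      have hnoS : ∀ s ∈ S, s ∉ closedNbr G p := by
        intro s hs hsp
        rcases mem_cn.1 hp1 with hpy | hpy
        · rcases mem_cn.1 hsp with h | h
          · exact hSYne s hs ((h.trans hpy).symm ▸ hy)
          · exact hSYadj s hs y hy (hpy ▸ h)
        · rcases mem_cn.1 hsp with h | h
          · exact hSYadj s hs y hy (h.symm ▸ hpy)
          · obtain ⟨w, hw1, hw2⟩ := hSw s hs
            have nxp : ¬ G.Adj x p := fun hh => hxp (mem_cn.2 (Or.inr hh.symm))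
            have nxp' : x ≠ p := fun hh => hxp (mem_cn.2 (Or.inl hh))
            have nys : ¬ G.Adj y s := hSYadj s hs y hy
            have nyw : ¬ G.Adj y w := fun hh => tri (hxy y hy) hh hw1.symm
            have npw : ¬ G.Adj p w := fun hh => tri hh hw2 h.symm
            have nxs : ¬ G.Adj x s := hSnadj s hs
            have dxs : x ≠ s := Ne.symm (hSx s hs)
            have dys : y ≠ s := fun hh => hSYne s hs (hh ▸ hy)
            have dyw : y ≠ w := fun hh => nys (hh.symm ▸ hw2)
            have dpw : p ≠ w := fun hh => nxp (hh.symm ▸ hw1)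
            exact c5_free' h5 (hxy y hy) hpy h hw2.symm hw1.symm
              nxp nys npw nxs nyw nxp' dxs dys dyw dpw
      refine ⟨p, hp1, ?_⟩
      apply Set.eq_singleton_iff_unique_mem.2
      refine ⟨⟨cn_symm hp1, hYR hy⟩, ?_⟩
      rintro w ⟨hw1, hw2⟩
      rw [hR] at hw2
      rcases hw2 with (h | h) | h
      · exact absurd hw1 (hnoS w h)
      · have hm : w ∈ ({y} : Set V) := hp2 ▸ ⟨hw1, Or.inl h⟩
        exact hm
      · exact absurd ((Set.mem_singleton_iff.1 h) ▸ hw1) hxp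
    have hxpriv : privSet G x R = ∅ := by
      rw [Set.eq_empty_iff_forall_notMem]
      rintro v ⟨hv1, hv2⟩
      rcases mem_cn.1 hv1 with h | h
      · have hm : y₁ ∈ closedNbr G v ∩ R := by
          rw [h]
          exact ⟨mem_cn.2 (Or.inr (hxy _ hy₁)), hYR hy₁⟩
        rw [hv2] at hm
        exact G.irrefl ((Set.mem_singleton_iff.1 hm) ▸ hxy _ hy₁)
      · by_cases hvY : v ∈ Y
        · have hm : v ∈ closedNbr G v ∩ R := ⟨mem_cn.2 (Or.inl rfl), hYR hvY⟩
          rw [hv2] at hm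
          exact G.irrefl ((Set.mem_singleton_iff.1 hm) ▸ h)
        · obtain ⟨s, hsS, hsadj⟩ := hdom v ⟨h, hvY⟩
          have hm : s ∈ closedNbr G v ∩ R := ⟨mem_cn.2 (Or.inr hsadj.symm), hSR hsS⟩
          rw [hv2] at hm
          exact hSx s hsS (Set.mem_singleton_iff.1 hm)
    have hRred : Redundant G R := by
      intro hirr
      obtain ⟨v, hv⟩ := hirr x hxR
      rw [hxpriv] at hv
      exact hv
    have hminR : ∀ R' : Set V, R' ⊂ R → ¬ Redundant G R' := by
      intro R' hsub hredR'
      apply hredR'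
      intro z hz
      by_cases hzx : z = x
      · rw [hzx] at hz ⊢
        obtain ⟨r, hrR, hrR'⟩ := Set.exists_of_ssubset hsub
        rw [hR] at hrR
        rcases hrR with (hrS | hrY) | hrx
        · have hS'sub : R' ∩ S ⊂ S := by
            rw [Set.ssubset_def]
            exact ⟨Set.inter_subset_right, fun hc => hrR' (hc hrS).1⟩
          have hnd := hmind _ hS'sub
          rw [DomOver] at hnd
          push_neg at hnd
          obtain ⟨b, hb, hbnd⟩ := hnd
          have hbadj : G.Adj x b := hb.1
          refine ⟨b, mem_cn.2 (Or.inr hbadj), ?_⟩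
          apply Set.eq_singleton_iff_unique_mem.2
          refine ⟨⟨mem_cn.2 (Or.inr hbadj.symm), hz⟩, ?_⟩
          rintro w ⟨hw1, hw2⟩
          have hwR : w ∈ R := hsub.subset hw2
          rw [hR] at hwR
          rcases hwR with (h | h) | h
          · rcases mem_cn.1 hw1 with h2 | h2
            · exact absurd (h2.symm ▸ hbadj) (hSnadj w h)
            · exact absurd h2.symm (hbnd w ⟨hw2, h⟩)
          · rcases mem_cn.1 hw1 with h2 | h2
            · exact absurd (h2 ▸ h) hb.2
            · exact (tri (hxy w h) h2.symm hbadj.symm).elim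
          · exact h
        · refine ⟨r, mem_cn.2 (Or.inr (hxy r hrY)), ?_⟩
          apply Set.eq_singleton_iff_unique_mem.2
          refine ⟨⟨mem_cn.2 (Or.inr (hxy r hrY).symm), hz⟩, ?_⟩
          rintro w ⟨hw1, hw2⟩
          have hwR : w ∈ R := hsub.subset hw2
          rw [hR] at hwR
          rcases hwR with (h | h) | h
          · rcases mem_cn.1 hw1 with h2 | h2
            · exact absurd (h2 ▸ h) (fun hh => hSYne r hh hrY)
            · exact absurd h2 (hSYadj w h r hrY)
          · rcases mem_cn.1 hw1 with h2 | h2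
            · exact absurd (h2 ▸ hw2) hrR'
            · exact absurd h2 (hYY r hrY w h)
          · exact h
        · exact absurd (by rw [Set.mem_singleton_iff.1 hrx]; exact hz) hrR'
      · have hzR : z ∈ R := hsub.subset hz
        have hnp : (privSet G z R).Nonempty := by
          rw [hR] at hzR
          rcases hzR with (h | h) | h
          · exact ⟨z, hprivS z h⟩
          · exact hprivYR z h
          · exact absurd (Set.mem_singleton_iff.1 h) hzx
        obtain ⟨p, hp⟩ := hnp
        exact ⟨p, priv_mono hz hsub.subset hp⟩
    have hredV : redVerts G R = {x} := by
      apply Set.eq_singleton_iff_unique_mem.2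
      refine ⟨⟨hxR, hxpriv⟩, ?_⟩
      rintro z ⟨hzR, hzpriv⟩
      by_contra hzx
      rw [hR] at hzR
      rcases hzR with (h | h) | h
      · have hm := hprivS z h
        rw [hzpriv] at hm
        exact hm
      · obtain ⟨p, hp⟩ := hprivYR z h
        rw [hzpriv] at hp
        exact hp
      · exact hzx (Set.mem_singleton_iff.1 h)
    have hNR : G.neighborSet x ∩ R = Y := by
      ext w
      constructor
      · rintro ⟨hw1, hw2⟩
        have hw1' : G.Adj x w := hw1
        rw [hR] at hw2
        rcases hw2 with (h | h) | h
        · exact absurd hw1' (hSnadj w h)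
        · exact h
        · exact absurd ((Set.mem_singleton_iff.1 h) ▸ hw1') G.irrefl
      · intro hw
        exact ⟨hxy w hw, hYR hw⟩
    exact ⟨⟨hRred, hminR⟩, hredV, hNR⟩
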